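/- arXiv:1406.2186 — 2 statements merged into one kernel-verified Lean document; each statement's English description precedes it below -/
import Mathlib

section
/- Efron–Stein inequality: if Z = (Z_1,…,Z_n) has independent coordinates, Z' is an independent copy of Z, and f:𝒵^n→ℝ satisfies E[f(Z)²] < ∞, then Var(f(Z)) ≤ (1/2) Σ_{j=1}^n E[|Δ_j f(Z)|²], where Δ_j f(Z) = f(Z^j) − f(Z) and Z^j is Z with its j-th coordinate replaced by Z'_j. -/
set_option linter.unusedSectionVars false
set_option linter.unusedVariables false
noncomputable section

open MeasureTheory ProbabilityTheory Function

namespace EfronStein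

section general

variable {α β : Type*} [MeasurableSpace α] [MeasurableSpace β]

/-- mp of fst on a product of probability measures -/
lemma mp_fst (μ : Measure α) (κ : Measure β) [IsProbabilityMeasure μ] [IsProbabilityMeasure κ] :
    MeasurePreserving Prod.fst (μ.prod κ) μ :=
  ⟨measurable_fst, by simp [Measure.map_fst_prod]⟩

lemma integral_mp {μ : Measure α} {κ : Measure β} {φ : α → β}
    (h : MeasurePreserving φ μ κ) {g : β → ℝ} (hg : AEStronglyMeasurable g κ) :
    ∫ x, g (φ x) ∂μ = ∫ y, g y ∂κ := by
  rw [← h.map_eq, integral_map h.measurable.aemeasurable (by rwa [h.map_eq])]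

lemma mul_integrable {μ : Measure α} {u v : α → ℝ}
    (hu : MemLp u 2 μ) (hv : MemLp v 2 μ) : Integrable (fun x => u x * v x) μ := by
  have h := hu.smul (E := ℝ) (𝕜 := ℝ) hv (p := 2) (q := 2) (r := 1)
  rw [← memLp_one_iff_integrable]
  simpa [smul_eq_mul, mul_comm, Pi.mul_def] using h

lemma sq_integral_le {μ : Measure α} [IsProbabilityMeasure μ] {h : α → ℝ}
    (hh : MemLp h 2 μ) : (∫ y, h y ∂μ) ^ 2 ≤ ∫ y, (h y) ^ 2 ∂μ := by
  have h0 := variance_nonneg h μ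
  rw [variance_eq_sub hh] at h0
  have : (μ[(h ^ 2 : α → ℝ)] : ℝ) = ∫ y, (h y) ^ 2 ∂μ := by
    simp [Pi.pow_apply]
  linarith [h0, this.symm ▸ h0]


lemma l2_partial (μ : Measure α) (κ : Measure β) [IsProbabilityMeasure μ]
    [IsProbabilityMeasure κ] {g : α × β → ℝ} (hg : MemLp g 2 (μ.prod κ)) :
    MemLp (fun x => ∫ y, g (x, y) ∂κ) 2 μ ∧
      ∫ x, (∫ y, g (x, y) ∂κ) ^ 2 ∂μ ≤ ∫ θ, (g θ) ^ 2 ∂(μ.prod κ) := by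
  have hsm := hg.aestronglyMeasurable
  have hsq : Integrable (fun θ => (g θ) ^ 2) (μ.prod κ) := by
    simpa using hg.integrable_sq
  have hint : Integrable g (μ.prod κ) := hg.integrable one_le_two
  have hslice : ∀ᵐ x ∂μ, Integrable (fun y => g (x, y)) κ := hint.prod_right_ae
  have hslicesq : ∀ᵐ x ∂μ, Integrable (fun y => (g (x, y)) ^ 2) κ := hsq.prod_right_ae
  have hmeas : AEStronglyMeasurable (fun x => ∫ y, g (x, y) ∂κ) μ := hsm.integral_prod_right'
  have hptwise : ∀ᵐ x ∂μ, (∫ y, g (x, y) ∂κ) ^ 2 ≤ ∫ y, (g (x, y)) ^ 2 ∂κ := by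
    filter_upwards [hslice, hslicesq] with x h1 h2
    exact sq_integral_le ((memLp_two_iff_integrable_sq h1.aestronglyMeasurable).2 h2)
  have hRHSint : Integrable (fun x => ∫ y, (g (x, y)) ^ 2 ∂κ) μ := hsq.integral_prod_left
  have hmeas2 : AEStronglyMeasurable (fun x => (∫ y, g (x, y) ∂κ) ^ 2) μ := by
    simpa [sq, Pi.mul_def] using hmeas.mul hmeas
  have hLHSint : Integrable (fun x => (∫ y, g (x, y) ∂κ) ^ 2) μ := by
    refine Integrable.mono' hRHSint hmeas2 ?_
    filter_upwards [hptwise] with x hx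
    rwa [Real.norm_eq_abs, abs_of_nonneg (sq_nonneg _)]
  refine ⟨(memLp_two_iff_integrable_sq hmeas).2 hLHSint, ?_⟩
  calc ∫ x, (∫ y, g (x, y) ∂κ) ^ 2 ∂μ ≤ ∫ x, ∫ y, (g (x, y)) ^ 2 ∂κ ∂μ :=
        integral_mono_ae hLHSint hRHSint hptwise
    _ = ∫ θ, (g θ) ^ 2 ∂(μ.prod κ) := (integral_prod _ hsq).symm

end general


section swap

variable {𝓩 : Type*} [MeasurableSpace 𝓩] {n : ℕ}

/-- Swap the two copies of each coordinate `i` with `p i`. -/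
def esSwap (p : Fin n → Prop) [DecidablePred p] :
    ((Fin n → 𝓩) × (Fin n → 𝓩)) → ((Fin n → 𝓩) × (Fin n → 𝓩)) :=
  fun θ => (fun i => if p i then θ.2 i else θ.1 i, fun i => if p i then θ.1 i else θ.2 i)

variable (ν : Fin n → Measure 𝓩) [∀ i, IsProbabilityMeasure (ν i)]

lemma mp_esSwap (p : Fin n → Prop) [DecidablePred p] :
    MeasurePreserving (esSwap (𝓩 := 𝓩) p)
      ((Measure.pi ν).prod (Measure.pi ν)) ((Measure.pi ν).prod (Measure.pi ν)) := by
  have he := measurePreserving_arrowProdEquivProdArrow 𝓩 𝓩 (Fin n) ν ν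
  set e := MeasurableEquiv.arrowProdEquivProdArrow 𝓩 𝓩 (Fin n) with he_def
  have hc : MeasurePreserving
      (fun (a : Fin n → 𝓩 × 𝓩) i => if p i then (a i).swap else a i)
      (Measure.pi fun i => (ν i).prod (ν i)) (Measure.pi fun i => (ν i).prod (ν i)) := by
    refine measurePreserving_pi (f := fun i (z : 𝓩 × 𝓩) => if p i then z.swap else z)
        (fun i => (ν i).prod (ν i)) (fun i => (ν i).prod (ν i)) (fun i => ?_)
    by_cases hp : p i
    · simpa [hp] using Measure.measurePreserving_swap (μ := ν i) (ν := ν i)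
    · simp only [hp, ↓reduceIte]; exact MeasurePreserving.id _
  have key : esSwap (𝓩 := 𝓩) p
      = e ∘ (fun a i => if p i then (a i).swap else a i) ∘ e.symm := by
    funext θ
    have h1 : (e.symm (θ.1, θ.2)) = fun i => (θ.1 i, θ.2 i) := rfl
    simp only [Function.comp_apply]
    have : e.symm θ = fun i => (θ.1 i, θ.2 i) := rfl
    rw [this]
    show _ = e (fun i => if p i then (θ.2 i, θ.1 i) else (θ.1 i, θ.2 i))
    have : e (fun i => if p i then (θ.2 i, θ.1 i) else (θ.1 i, θ.2 i))
        = (fun i => ((if p i then (θ.2 i, θ.1 i) else (θ.1 i, θ.2 i)) : 𝓩 × 𝓩).1,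
           fun i => ((if p i then (θ.2 i, θ.1 i) else (θ.1 i, θ.2 i)) : 𝓩 × 𝓩).2) := rfl
    rw [this]
    unfold esSwap
    refine Prod.ext ?_ ?_ <;> · funext i; by_cases hp : p i <;> simp [hp]
  rw [key]
  exact he.comp (hc.comp (MeasurePreserving.symm e he))


def mrg (k : ℕ) : ((Fin n → 𝓩) × (Fin n → 𝓩)) → (Fin n → 𝓩) :=
  fun θ i => if (i : ℕ) < k then θ.1 i else θ.2 i

def updMap (k : Fin n) : ((Fin n → 𝓩) × (Fin n → 𝓩)) → (Fin n → 𝓩) :=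
  fun θ => Function.update θ.1 k (θ.2 k)

lemma mp_mrg (k : ℕ) : MeasurePreserving (mrg (𝓩 := 𝓩) k)
    ((Measure.pi ν).prod (Measure.pi ν)) (Measure.pi ν) := by
  have hk : mrg (𝓩 := 𝓩) (n := n) k = Prod.fst ∘ esSwap (fun i => ¬((i : ℕ) < k)) := by
    funext θ i
    simp only [mrg, esSwap, Function.comp_apply]
    rw [ite_not]
  rw [hk]
  exact (mp_fst _ _).comp (mp_esSwap ν _)

lemma updMap_eq (k : Fin n) :
    updMap (𝓩 := 𝓩) k = Prod.fst ∘ esSwap (fun i => i = k) := by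
  funext θ i
  simp only [updMap, esSwap, Function.comp_apply, Function.update_apply]
  by_cases h : i = k
  · subst h; simp
  · simp [h]

lemma mp_updMap (k : Fin n) : MeasurePreserving (updMap (𝓩 := 𝓩) k)
    ((Measure.pi ν).prod (Measure.pi ν)) (Measure.pi ν) := by
  rw [updMap_eq]
  exact (mp_fst _ _).comp (mp_esSwap ν _)

/-- partial averaging over the coordinates `≥ j` -/
def Fav (f : (Fin n → 𝓩) → ℝ) (j : ℕ) : (Fin n → 𝓩) → ℝ :=
  fun x => ∫ y, f (mrg j (x, y)) ∂(Measure.pi ν)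

/-- martingale differences -/
def Dif (f : (Fin n → 𝓩) → ℝ) (j : ℕ) : (Fin n → 𝓩) → ℝ :=
  fun x => Fav ν f (j + 1) x - Fav ν f j x

/-- averaging over coordinate `k` -/
def Ak (f : (Fin n → 𝓩) → ℝ) (k : Fin n) : (Fin n → 𝓩) → ℝ :=
  fun x => ∫ w, f (Function.update x k (w k)) ∂(Measure.pi ν)

variable {f : (Fin n → 𝓩) → ℝ}

lemma hFmem (hf : Measurable f) (hL2 : MemLp f 2 (Measure.pi ν)) (j : ℕ) :
    MemLp (Fav ν f j) 2 (Measure.pi ν) :=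
  (l2_partial _ _ (hL2.comp_measurePreserving (mp_mrg ν j))).1

lemma hAmem (hf : Measurable f) (hL2 : MemLp f 2 (Measure.pi ν)) (k : Fin n) :
    MemLp (Ak ν f k) 2 (Measure.pi ν) :=
  (l2_partial _ _ (hL2.comp_measurePreserving (mp_updMap ν k))).1

lemma hDmem (hf : Measurable f) (hL2 : MemLp f 2 (Measure.pi ν)) (j : ℕ) :
    MemLp (Dif ν f j) 2 (Measure.pi ν) :=
  (hFmem ν hf hL2 (j + 1)).sub (hFmem ν hf hL2 j)


section ptwise

lemma esSwap_fst (k : Fin n) (θ : (Fin n → 𝓩) × (Fin n → 𝓩)) :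
    (esSwap (fun i => i = k) θ).1 = Function.update θ.1 k (θ.2 k) := by
  have := congrFun (updMap_eq (𝓩 := 𝓩) k) θ
  exact (this.symm : (Prod.fst ∘ esSwap fun i => i = k) θ = _)

lemma mrg_esSwap (k : Fin n) (θ : (Fin n → 𝓩) × (Fin n → 𝓩)) :
    mrg ((k : ℕ) + 1) (esSwap (fun i => i = k) θ) = mrg (k : ℕ) θ := by
  funext i
  simp only [mrg, esSwap]
  by_cases hik : i = k
  · subst hik
    simp [Nat.lt_succ_self, lt_irrefl]
  · have hik' : (i : ℕ) ≠ (k : ℕ) := fun h => hik (Fin.ext h)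
    by_cases hi : (i : ℕ) < (k : ℕ)
    · simp [hik, hi, Nat.lt_succ_of_lt hi]
    · have h2 : ¬ ((i : ℕ) < (k : ℕ) + 1) := by omega
      simp [hik, hi, h2]

lemma mrg_esSwap' (k : Fin n) (x : Fin n → 𝓩) (θ : (Fin n → 𝓩) × (Fin n → 𝓩)) :
    mrg (k : ℕ) (x, (esSwap (fun i => i = k) θ).1)
      = Function.update (mrg ((k : ℕ) + 1) (x, θ.1)) k (θ.2 k) := by
  funext i
  simp only [mrg, esSwap, Function.update_apply]
  by_cases hik : i = k
  · subst hik; simp [lt_irrefl]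
  · have hik' : (i : ℕ) ≠ (k : ℕ) := fun h => hik (Fin.ext h)
    by_cases hi : (i : ℕ) < (k : ℕ)
    · simp [hik, hi, Nat.lt_succ_of_lt hi]
    · have h2 : ¬ ((i : ℕ) < (k : ℕ) + 1) := by omega
      simp [hik, hi, h2]

end ptwise

end swap

section core

variable {𝓩 : Type*} [MeasurableSpace 𝓩] {n : ℕ}
variable (ν : Fin n → Measure 𝓩) [∀ i, IsProbabilityMeasure (ν i)]
variable {f : (Fin n → 𝓩) → ℝ}

local notation "π" => Measure.pi ν
local notation "P" => Measure.prod (Measure.pi ν) (Measure.pi ν)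

/-- `Fav j` only depends on the first `j` coordinates. -/
lemma Fav_congr (j : ℕ) {x x' : Fin n → 𝓩}
    (h : ∀ i : Fin n, (i : ℕ) < j → x i = x' i) :
    Fav ν f j x = Fav ν f j x' := by
  unfold Fav
  congr 1
  funext y
  congr 1
  funext i
  simp only [mrg]
  split
  · exact h _ ‹_›
  · rfl

lemma pair_int (hf : Measurable f) (hL2 : MemLp f 2 π) (k j : ℕ) :
    ∫ x, Dif ν f k x * Fav ν f j x ∂π
      = ∫ θ, Dif ν f k θ.1 * f (mrg j θ) ∂P := by
  have hInt : Integrable (fun θ : (Fin n → 𝓩) × (Fin n → 𝓩) =>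
      Dif ν f k θ.1 * f (mrg j θ)) P :=
    mul_integrable ((hDmem ν hf hL2 k).comp_measurePreserving (mp_fst _ _))
      (hL2.comp_measurePreserving (mp_mrg ν j))
  rw [integral_prod _ hInt]
  refine integral_congr_ae (Filter.Eventually.of_forall fun x => ?_)
  exact (integral_const_mul _ _).symm

lemma orth_lt (hf : Measurable f) (hL2 : MemLp f 2 π) {k l : ℕ} (hn : l < n)
    (hkl : k < l) : ∫ x, Dif ν f k x * Dif ν f l x ∂π = 0 := by
  set lf : Fin n := ⟨l, hn⟩ with hlf
  have hlv : (lf : ℕ) = l := rfl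
  have hgm : AEStronglyMeasurable (fun θ : (Fin n → 𝓩) × (Fin n → 𝓩) =>
      Dif ν f k θ.1 * f (mrg (l+1) θ)) P :=
    (((hDmem ν hf hL2 k).comp_measurePreserving (mp_fst _ _)).aestronglyMeasurable).mul
      ((hL2.comp_measurePreserving (mp_mrg ν (l+1))).aestronglyMeasurable)
  have h1 : ∫ θ, Dif ν f k θ.1 * f (mrg (l+1) θ) ∂P
      = ∫ θ, Dif ν f k θ.1 * f (mrg l θ) ∂P := by
    have hmp := integral_mp (mp_esSwap ν (fun i => i = lf))
      (g := fun θ => Dif ν f k θ.1 * f (mrg (l+1) θ)) hgm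
    rw [← hmp]
    refine integral_congr_ae (Filter.Eventually.of_forall fun θ => ?_)
    have hD : Dif ν f k ((esSwap (fun i => i = lf) θ).1) = Dif ν f k θ.1 := by
      have hupd : ∀ i : Fin n, (i : ℕ) < k + 1 →
          (esSwap (fun i => i = lf) θ).1 i = θ.1 i := by
        intro i hi
        rw [esSwap_fst]
        refine Function.update_of_ne ?_ _ _
        intro hc
        subst hc
        omega
      unfold Dif
      rw [Fav_congr ν (k+1) hupd, Fav_congr ν k (fun i hi => hupd i (by omega))]
    have hm : mrg (l+1) (esSwap (fun i => i = lf) θ) = mrg l θ := by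
      have := mrg_esSwap (𝓩 := 𝓩) lf θ
      rwa [hlv] at this
    simp only []
    rw [hD, hm]
  have hDl : ∀ x, Dif ν f l x = Fav ν f (l+1) x - Fav ν f l x := fun _ => rfl
  have hint1 : Integrable (fun x => Dif ν f k x * Fav ν f (l+1) x) π :=
    mul_integrable (hDmem ν hf hL2 k) (hFmem ν hf hL2 (l+1))
  have hint2 : Integrable (fun x => Dif ν f k x * Fav ν f l x) π :=
    mul_integrable (hDmem ν hf hL2 k) (hFmem ν hf hL2 l)
  have : ∫ x, Dif ν f k x * Dif ν f l x ∂π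
      = (∫ x, Dif ν f k x * Fav ν f (l+1) x ∂π)
        - ∫ x, Dif ν f k x * Fav ν f l x ∂π := by
    rw [← integral_sub hint1 hint2]
    refine integral_congr_ae (Filter.Eventually.of_forall fun x => ?_)
    simp only [hDl]
    ring
  rw [this, pair_int ν hf hL2 k (l+1), pair_int ν hf hL2 k l, h1, sub_self]


lemma Ak_update (k : Fin n) (x : Fin n → 𝓩) (t : 𝓩) :
    Ak ν f k (Function.update x k t) = Ak ν f k x := by
  unfold Ak
  congr 1
  funext w
  rw [Function.update_idem]

lemma key_bound (hf : Measurable f) (hL2 : MemLp f 2 π) (k : Fin n) :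
    ∫ x, (Dif ν f (k : ℕ) x) ^ 2 ∂π
      ≤ (1/2) * ∫ θ, (f θ.1 - f (updMap k θ)) ^ 2 ∂P := by
  have hA : MemLp (Ak ν f k) 2 π := hAmem ν hf hL2 k
  set A := Ak ν f k with hAdef
  have hh : MemLp (fun x => f x - A x) 2 π := hL2.sub hA
  have hS := mp_esSwap ν (fun i => i = k)
  -- Step 1: a.e. representation of the martingale difference
  have hgm1 : ∀ x : Fin n → 𝓩, Measurable fun y => f (mrg (k : ℕ) (x, y)) := fun x =>
    hf.comp ((mp_mrg ν (k : ℕ)).measurable.comp measurable_prodMk_left)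
  have s1 : ∀ x, Fav ν f (k : ℕ) x = ∫ θ, f (mrg (k : ℕ) (x, θ.1)) ∂P := fun x =>
    (integral_mp (mp_fst π π) (g := fun y => f (mrg (k : ℕ) (x, y)))
      (hgm1 x).aestronglyMeasurable).symm
  have s2 : ∀ x, ∫ θ, f (mrg (k : ℕ) (x, θ.1)) ∂P
      = ∫ θ, f (Function.update (mrg ((k : ℕ)+1) (x, θ.1)) k (θ.2 k)) ∂P := by
    intro x
    have hmp := integral_mp hS (g := fun θ => f (mrg (k : ℕ) (x, θ.1)))
      ((hgm1 x).comp measurable_fst).aestronglyMeasurable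
    rw [← hmp]
    refine integral_congr_ae (.of_forall fun θ => ?_)
    simp only []
    rw [mrg_esSwap']
  have hU : MemLp (fun q : (Fin n → 𝓩) × ((Fin n → 𝓩) × (Fin n → 𝓩)) =>
      f (mrg (k : ℕ) (q.1, (esSwap (fun i => i = k) q.2).1))) 2 (Measure.prod π P) := by
    have h1 : MeasurePreserving
        (Prod.map (id : (Fin n → 𝓩) → (Fin n → 𝓩)) (Prod.fst ∘ esSwap (fun i => i = k)))
        (Measure.prod π P) (Measure.prod π π) :=
      (MeasurePreserving.id π).prod ((mp_fst π π).comp hS)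
    have hmp := (mp_mrg ν (k : ℕ)).comp h1
    exact hL2.comp_measurePreserving hmp
  have s3int : ∀ᵐ x ∂π, Integrable
      (fun θ : (Fin n → 𝓩) × (Fin n → 𝓩) =>
        f (Function.update (mrg ((k : ℕ)+1) (x, θ.1)) k (θ.2 k))) P := by
    filter_upwards [(hU.integrable one_le_two).prod_right_ae] with x hx
    refine hx.congr (.of_forall fun θ => ?_)
    simp only []
    rw [mrg_esSwap']
  have s3 : ∀ᵐ x ∂π, ∫ θ, f (Function.update (mrg ((k : ℕ)+1) (x, θ.1)) k (θ.2 k)) ∂P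
      = ∫ y, A (mrg ((k : ℕ)+1) (x, y)) ∂π := by
    filter_upwards [s3int] with x hx
    rw [integral_prod _ hx]
    rfl
  have s5f : ∀ᵐ x ∂π, Integrable (fun y => f (mrg ((k : ℕ)+1) (x, y))) π :=
    ((hL2.comp_measurePreserving (mp_mrg ν ((k : ℕ)+1))).integrable one_le_two).prod_right_ae
  have s5A : ∀ᵐ x ∂π, Integrable (fun y => A (mrg ((k : ℕ)+1) (x, y))) π :=
    ((hA.comp_measurePreserving (mp_mrg ν ((k : ℕ)+1))).integrable one_le_two).prod_right_ae
  have hrep : Dif ν f (k : ℕ)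
      =ᵐ[π] fun x => ∫ y, (f (mrg ((k : ℕ)+1) (x, y)) - A (mrg ((k : ℕ)+1) (x, y))) ∂π := by
    filter_upwards [s3, s5f, s5A] with x h3 h5f h5A
    have hFk : Fav ν f (k : ℕ) x = ∫ y, A (mrg ((k : ℕ)+1) (x, y)) ∂π := by
      rw [s1 x, s2 x, h3]
    show Fav ν f ((k : ℕ)+1) x - Fav ν f (k : ℕ) x = _
    rw [hFk]
    show (∫ y, f (mrg ((k : ℕ)+1) (x, y)) ∂π) - ∫ y, A (mrg ((k : ℕ)+1) (x, y)) ∂π = _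
    rw [← integral_sub h5f h5A]
  -- Step 2: Jensen
  have hg2 : MemLp (fun θ : (Fin n → 𝓩) × (Fin n → 𝓩) =>
      f (mrg ((k : ℕ)+1) θ) - A (mrg ((k : ℕ)+1) θ)) 2 P :=
    hh.comp_measurePreserving (mp_mrg ν ((k : ℕ)+1))
  have jensen := (l2_partial π π hg2).2
  have eq1 : ∫ x, (Dif ν f (k : ℕ) x) ^ 2 ∂π
      = ∫ x, (∫ y, (f (mrg ((k : ℕ)+1) (x, y)) - A (mrg ((k : ℕ)+1) (x, y))) ∂π) ^ 2 ∂π :=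
    integral_congr_ae (hrep.mono fun x hx => by dsimp only; rw [hx])
  have eq2 : ∫ θ, (f (mrg ((k : ℕ)+1) θ) - A (mrg ((k : ℕ)+1) θ)) ^ 2 ∂P
      = ∫ u, (f u - A u) ^ 2 ∂π :=
    integral_mp (mp_mrg ν ((k : ℕ)+1)) (g := fun u => (f u - A u) ^ 2)
      hh.integrable_sq.aestronglyMeasurable
  have step2 : ∫ x, (Dif ν f (k : ℕ) x) ^ 2 ∂π ≤ ∫ u, (f u - A u) ^ 2 ∂π := by
    rw [eq1, ← eq2]; exact jensen
  -- Step 3: the identity ∫ (f - A)² = ½ ∫ (f θ.1 - f (upd θ))²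
  have hfA : Integrable (fun x => f x * A x) π := mul_integrable hL2 hA
  have hAA : Integrable (fun x => A x * A x) π := mul_integrable hA hA
  have hff : Integrable (fun x => f x ^ 2) π := hL2.integrable_sq
  have hAupd : ∀ θ : (Fin n → 𝓩) × (Fin n → 𝓩), A (updMap k θ) = A θ.1 := fun θ =>
    Ak_update ν k θ.1 (θ.2 k)
  have hPfu : MemLp (fun θ : (Fin n → 𝓩) × (Fin n → 𝓩) => f (updMap k θ)) 2 P :=
    hL2.comp_measurePreserving (mp_updMap ν k)
  have hPf1 : MemLp (fun θ : (Fin n → 𝓩) × (Fin n → 𝓩) => f θ.1) 2 P :=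
    hL2.comp_measurePreserving (mp_fst π π)
  have hPA1 : MemLp (fun θ : (Fin n → 𝓩) × (Fin n → 𝓩) => A θ.1) 2 P :=
    hA.comp_measurePreserving (mp_fst π π)
  have E1 : ∫ θ, f θ.1 * f (updMap k θ) ∂P = ∫ x, f x * A x ∂π := by
    rw [integral_prod _ (mul_integrable hPf1 hPfu)]
    refine integral_congr_ae (.of_forall fun x => ?_)
    dsimp only
    exact integral_const_mul _ _
  have e1 : ∫ x, f x * A x ∂π = ∫ θ, f θ.1 * A θ.1 ∂P :=
    (integral_mp (mp_fst π π) (g := fun x => f x * A x)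
      (hL2.aestronglyMeasurable.mul hA.aestronglyMeasurable)).symm
  have e2 : ∫ θ, f θ.1 * A θ.1 ∂P = ∫ θ, f θ.1 * A (updMap k θ) ∂P :=
    integral_congr_ae (.of_forall fun θ => by dsimp only; rw [hAupd θ])
  have e3 : ∫ θ, f θ.1 * A (updMap k θ) ∂P = ∫ θ, f (updMap k θ) * A θ.1 ∂P := by
    have hgm : AEStronglyMeasurable
        (fun θ : (Fin n → 𝓩) × (Fin n → 𝓩) => f θ.1 * A (updMap k θ)) P :=
      hPf1.aestronglyMeasurable.mul
        ((hA.comp_measurePreserving (mp_updMap ν k)).aestronglyMeasurable)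
    have hmp := integral_mp hS (g := fun θ => f θ.1 * A (updMap k θ)) hgm
    rw [← hmp]
    refine integral_congr_ae (.of_forall fun θ => ?_)
    simp only []
    have h1 : (esSwap (fun i => i = k) θ).1 = updMap k θ := esSwap_fst k θ
    have h2 : updMap k (esSwap (fun i => i = k) θ) = θ.1 := by
      show Function.update (esSwap (fun i => i = k) θ).1 k
        ((esSwap (fun i => i = k) θ).2 k) = θ.1
      have h2k : (esSwap (fun i => i = k) θ).2 k = θ.1 k := by simp [esSwap]
      rw [h1, h2k]
      show Function.update (Function.update θ.1 k (θ.2 k)) k (θ.1 k) = θ.1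
      rw [Function.update_idem, Function.update_eq_self]
    rw [h1, h2]
  have e4 : ∫ θ, f (updMap k θ) * A θ.1 ∂P = ∫ x, A x * A x ∂π := by
    rw [integral_prod _ (mul_integrable hPfu hPA1)]
    refine integral_congr_ae (.of_forall fun x => ?_)
    dsimp only
    rw [integral_mul_const]
    exact mul_comm _ _
  have E2 : ∫ x, A x * A x ∂π = ∫ x, f x * A x ∂π := by rw [← e4, ← e3, ← e2, ← e1]
  have X1 : ∫ x, (f x - A x) ^ 2 ∂π
      = ∫ x, f x ^ 2 ∂π - 2 * ∫ x, f x * A x ∂π + ∫ x, A x * A x ∂π := by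
    calc ∫ x, (f x - A x) ^ 2 ∂π
        = ∫ x, (f x ^ 2 - 2 * (f x * A x) + A x * A x) ∂π :=
          integral_congr_ae (.of_forall fun x => by ring)
      _ = ∫ x, (f x ^ 2 - 2 * (f x * A x)) ∂π + ∫ x, A x * A x ∂π :=
          integral_add (hff.sub (hfA.const_mul 2)) hAA
      _ = (∫ x, f x ^ 2 ∂π - ∫ x, 2 * (f x * A x) ∂π) + ∫ x, A x * A x ∂π := by
          rw [integral_sub hff (hfA.const_mul 2)]
      _ = _ := by rw [integral_const_mul]
  have hT2 : ∫ θ, (f θ.1) ^ 2 ∂P = ∫ x, f x ^ 2 ∂π :=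
    integral_mp (mp_fst π π) (g := fun x => f x ^ 2) hff.aestronglyMeasurable
  have hT3 : ∫ θ, (f (updMap k θ)) ^ 2 ∂P = ∫ x, f x ^ 2 ∂π :=
    integral_mp (mp_updMap ν k) (g := fun x => f x ^ 2) hff.aestronglyMeasurable
  have X2 : ∫ θ, (f θ.1 - f (updMap k θ)) ^ 2 ∂P
      = 2 * ∫ x, f x ^ 2 ∂π - 2 * ∫ x, f x * A x ∂π := by
    have hint3 : Integrable
        (fun θ : (Fin n → 𝓩) × (Fin n → 𝓩) => f θ.1 * f (updMap k θ)) P :=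
      mul_integrable hPf1 hPfu
    calc ∫ θ, (f θ.1 - f (updMap k θ)) ^ 2 ∂P
        = ∫ θ, ((f θ.1) ^ 2 - 2 * (f θ.1 * f (updMap k θ)) + (f (updMap k θ)) ^ 2) ∂P :=
          integral_congr_ae (.of_forall fun θ => by ring)
      _ = ∫ θ, ((f θ.1) ^ 2 - 2 * (f θ.1 * f (updMap k θ))) ∂P
            + ∫ θ, (f (updMap k θ)) ^ 2 ∂P :=
          integral_add (hPf1.integrable_sq.sub (hint3.const_mul 2)) hPfu.integrable_sq
      _ = (∫ θ, (f θ.1) ^ 2 ∂P - ∫ θ, 2 * (f θ.1 * f (updMap k θ)) ∂P)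
            + ∫ θ, (f (updMap k θ)) ^ 2 ∂P := by
          rw [integral_sub hPf1.integrable_sq (hint3.const_mul 2)]
      _ = _ := by rw [integral_const_mul, hT2, hT3, E1]; ring
  linarith [step2, X1, X2, E1, E2]


theorem core (hf : Measurable f) (hL2 : MemLp f 2 π) :
    variance f π ≤ (1/2) * ∑ j : Fin n,
      ∫ θ, (f (Function.update θ.1 j (θ.2 j)) - f θ.1) ^ 2 ∂P := by
  set c := ∫ x, f x ∂π with hc
  have hFavn : ∀ x, Fav ν f n x = f x := by
    intro x
    have : ∀ y : Fin n → 𝓩, f (mrg n (x, y)) = f x := by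
      intro y
      congr 1
      funext i
      simp [mrg, i.isLt]
    unfold Fav
    rw [integral_congr_ae (.of_forall this)]
    simp
  have hFav0 : ∀ x, Fav ν f 0 x = c := by
    intro x
    unfold Fav
    congr 1
  have htel : ∀ x, f x - c = ∑ k ∈ Finset.range n, Dif ν f k x := by
    intro x
    show f x - c = ∑ k ∈ Finset.range n, (Fav ν f (k+1) x - Fav ν f k x)
    rw [Finset.sum_range_sub (f := fun j => Fav ν f j x), hFavn, hFav0]
  have hvar : variance f π = ∫ x, (f x - c) ^ 2 ∂π := by
    rw [variance_eq_integral hL2.aestronglyMeasurable.aemeasurable]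
  have hDD : ∀ k l : ℕ, Integrable (fun x => Dif ν f k x * Dif ν f l x) π := fun k l =>
    mul_integrable (hDmem ν hf hL2 k) (hDmem ν hf hL2 l)
  have hexp : variance f π = ∑ k ∈ Finset.range n, ∫ x, (Dif ν f k x) ^ 2 ∂π := by
    rw [hvar]
    have h1 : ∫ x, (f x - c) ^ 2 ∂π
        = ∫ x, ∑ k ∈ Finset.range n, ∑ l ∈ Finset.range n,
            Dif ν f k x * Dif ν f l x ∂π := by
      refine integral_congr_ae (.of_forall fun x => ?_)
      dsimp only
      rw [htel x, sq, Finset.sum_mul_sum]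
    rw [h1, integral_finset_sum _ (fun k _ => integrable_finset_sum _ (fun l _ => hDD k l))]
    refine Finset.sum_congr rfl fun k hk => ?_
    rw [integral_finset_sum _ (fun l _ => hDD k l)]
    rw [Finset.sum_eq_single_of_mem k hk]
    · refine integral_congr_ae (.of_forall fun x => ?_)
      dsimp only
      rw [pow_two]
    · intro l hl hne
      rcases lt_or_gt_of_ne hne with h | h
      · have := orth_lt ν hf hL2 (Finset.mem_range.mp hk) h
        rw [← this]
        exact integral_congr_ae (.of_forall fun x => mul_comm _ _)
      · exact orth_lt ν hf hL2 (Finset.mem_range.mp hl) h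
  have hfin : ∑ k ∈ Finset.range n, ∫ x, (Dif ν f k x) ^ 2 ∂π
      = ∑ j : Fin n, ∫ x, (Dif ν f (j : ℕ) x) ^ 2 ∂π :=
    (Fin.sum_univ_eq_sum_range (fun k => ∫ x, (Dif ν f k x) ^ 2 ∂π) n).symm
  have hbound : ∑ j : Fin n, ∫ x, (Dif ν f (j : ℕ) x) ^ 2 ∂π
      ≤ ∑ j : Fin n, (1/2) * ∫ θ, (f θ.1 - f (updMap j θ)) ^ 2 ∂P :=
    Finset.sum_le_sum fun j _ => key_bound ν hf hL2 j
  have hfinal : ∑ j : Fin n, (1/2) * ∫ θ, (f θ.1 - f (updMap j θ)) ^ 2 ∂P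
      = (1/2) * ∑ j : Fin n,
        ∫ θ, (f (Function.update θ.1 j (θ.2 j)) - f θ.1) ^ 2 ∂P := by
    rw [Finset.mul_sum]
    refine Finset.sum_congr rfl fun j _ => ?_
    congr 1
    refine integral_congr_ae (.of_forall fun θ => ?_)
    show (f θ.1 - f (updMap j θ)) ^ 2 = (f (Function.update θ.1 j (θ.2 j)) - f θ.1) ^ 2
    have h : updMap j θ = Function.update θ.1 j (θ.2 j) := rfl
    rw [h]
    ring
  rw [hexp, hfin, ← hfinal]
  exact hbound

end core

end EfronStein
end

open MeasureTheory ProbabilityTheory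

/-- Efron–Stein inequality: if `Z = (Z_1,…,Z_n)` has independent coordinates,
`Z'` is an independent copy of `Z`, and `f(Z)` is square integrable, then
`Var(f(Z)) ≤ (1/2) ∑_j E[(f(Z^j) - f(Z))^2]`, where `Z^j` replaces the `j`-th
coordinate of `Z` by `Z'_j`. -/
theorem efron_stein {Ω 𝓩 : Type*} [MeasurableSpace Ω] [MeasurableSpace 𝓩]
    (μ : Measure Ω) [IsProbabilityMeasure μ] {n : ℕ}
    (Z Z' : Ω → (Fin n → 𝓩))
    (hZmeas : Measurable Z) (hZ'meas : Measurable Z')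
    (hcoordindep : iIndepFun
      (fun j ω => Z ω j) μ)
    (hindep : IndepFun Z Z' μ)
    (hcopy : Measure.map Z μ = Measure.map Z' μ)
    (f : (Fin n → 𝓩) → ℝ) (hf : Measurable f)
    (hL2 : MemLp (fun ω => f (Z ω)) 2 μ) :
    variance (fun ω => f (Z ω)) μ ≤
      (1/2) * ∑ j : Fin n,
        ∫ ω, (f (Function.update (Z ω) j (Z' ω j)) - f (Z ω))^2 ∂μ := by
  classical
  set ν : Fin n → Measure 𝓩 := fun j => μ.map (fun ω => Z ω j) with hν
  have hZj : ∀ j, Measurable fun ω => Z ω j := fun j =>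
    (measurable_pi_apply j).comp hZmeas
  haveI : ∀ j, IsProbabilityMeasure (ν j) := fun j =>
    Measure.isProbabilityMeasure_map (hZj j).aemeasurable
  have hmapZ : μ.map Z = Measure.pi ν := by
    refine (Measure.pi_eq (μ := ν) fun s hs => ?_).symm
    rw [Measure.map_apply hZmeas (MeasurableSet.univ_pi hs)]
    have hpre : Z ⁻¹' (Set.univ.pi s) = ⋂ j ∈ Finset.univ, (fun ω => Z ω j) ⁻¹' (s j) := by
      ext ω
      simp [Set.mem_pi]
    rw [hpre, hcoordindep.measure_inter_preimage_eq_mul Finset.univ (fun j _ => hs j)]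
    refine Finset.prod_congr rfl fun j _ => ?_
    rw [hν]
    exact (Measure.map_apply (hZj j) (hs j)).symm
  have hpairmeas : Measurable fun ω => (Z ω, Z' ω) := hZmeas.prodMk hZ'meas
  have hpair : μ.map (fun ω => (Z ω, Z' ω)) = (Measure.pi ν).prod (Measure.pi ν) := by
    have h := (indepFun_iff_map_prod_eq_prod_map_map hZmeas.aemeasurable
      hZ'meas.aemeasurable).mp hindep
    rw [h, ← hcopy, hmapZ]
  have hfπ : MemLp f 2 (Measure.pi ν) := by
    rw [← hmapZ]
    exact (memLp_map_measure_iff hf.aestronglyMeasurable hZmeas.aemeasurable).2 hL2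
  have hI1 : ∫ x, f x ∂(Measure.pi ν) = ∫ ω, f (Z ω) ∂μ := by
    rw [← hmapZ, integral_map hZmeas.aemeasurable hf.aestronglyMeasurable]
  have hI2 : ∫ x, f x ^ 2 ∂(Measure.pi ν) = ∫ ω, f (Z ω) ^ 2 ∂μ := by
    rw [← hmapZ, integral_map hZmeas.aemeasurable (hf.pow_const 2).aestronglyMeasurable]
  have hvar : variance (fun ω => f (Z ω)) μ = variance f (Measure.pi ν) := by
    rw [variance_eq_sub hL2, variance_eq_sub hfπ]
    simp only [Pi.pow_apply]
    rw [hI1, hI2]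
  have hterm : ∀ j : Fin n,
      ∫ ω, (f (Function.update (Z ω) j (Z' ω j)) - f (Z ω))^2 ∂μ
        = ∫ θ : (Fin n → 𝓩) × (Fin n → 𝓩),
            (f (Function.update θ.1 j (θ.2 j)) - f θ.1)^2
            ∂((Measure.pi ν).prod (Measure.pi ν)) := by
    intro j
    have hgj : Measurable fun θ : (Fin n → 𝓩) × (Fin n → 𝓩) =>
        (f (Function.update θ.1 j (θ.2 j)) - f θ.1)^2 := by
      have h1 : Measurable fun θ : (Fin n → 𝓩) × (Fin n → 𝓩) =>
          Function.update θ.1 j (θ.2 j) := (EfronStein.mp_updMap ν j).measurable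
      exact (((hf.comp h1).sub (hf.comp measurable_fst)).pow_const 2)
    rw [← hpair, integral_map hpairmeas.aemeasurable hgj.aestronglyMeasurable]
  rw [hvar]
  calc variance f (Measure.pi ν)
      ≤ (1/2) * ∑ j : Fin n, ∫ θ : (Fin n → 𝓩) × (Fin n → 𝓩),
          (f (Function.update θ.1 j (θ.2 j)) - f θ.1)^2
          ∂((Measure.pi ν).prod (Measure.pi ν)) := EfronStein.core ν hf hfπ
    _ = (1/2) * ∑ j : Fin n,
          ∫ ω, (f (Function.update (Z ω) j (Z' ω j)) - f (Z ω))^2 ∂μ := by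
        rw [Finset.sum_congr rfl fun j _ => (hterm j).symm]
end

section
/- Chatterjee's covariance identity: for square-integrable functions g, f:𝒵^n→ℝ of independent coordinates Z, Cov(g(Z), f(Z)) = (1/2) Σ_{j=1}^n Σ_{A ⊂ [n], j ∉ A} K_{n,A} E[Δ_j g(Z) · Δ_j f(Z^A)], where K_{n,A} = |A|!(n−|A|−1)!/n!. -/
open MeasureTheory ProbabilityTheory

namespace ChatterjeeAux

variable {𝓩 : Type*} [MeasurableSpace 𝓩] {n : ℕ}

/-- Replace the coordinates in `B` of the first vector by those of the second. -/
def resample (B : Finset (Fin n)) (p : (Fin n → 𝓩) × (Fin n → 𝓩)) : Fin n → 𝓩 :=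
  fun i => if i ∈ B then p.2 i else p.1 i

lemma measurable_resample (B : Finset (Fin n)) : Measurable (resample (𝓩 := 𝓩) B) := by
  apply measurable_pi_lambda
  intro i
  unfold resample
  by_cases h : i ∈ B <;> simp only [h, if_true, if_false]
  · exact (measurable_pi_apply i).comp measurable_snd
  · exact (measurable_pi_apply i).comp measurable_fst

/-- Swap coordinate `j` between the two vectors. -/
def swapAt (j : Fin n) (p : (Fin n → 𝓩) × (Fin n → 𝓩)) : (Fin n → 𝓩) × (Fin n → 𝓩) :=
  (Function.update p.1 j (p.2 j), Function.update p.2 j (p.1 j))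

omit [MeasurableSpace 𝓩] in
lemma resample_swapAt (B : Finset (Fin n)) (j : Fin n) (p : (Fin n → 𝓩) × (Fin n → 𝓩)) :
    resample B (swapAt j p) = resample (if j ∈ B then B.erase j else insert j B) p := by
  funext i
  by_cases hij : i = j
  · subst hij
    by_cases hB : i ∈ B <;>
      simp [resample, swapAt, hB, Function.update_apply]
  · by_cases hB : j ∈ B <;> by_cases hiB : i ∈ B <;>
      simp [resample, swapAt, Function.update_apply, hij, hB, hiB, Finset.mem_erase,
        Finset.mem_insert]

omit [MeasurableSpace 𝓩] in
lemma resample_empty (p : (Fin n → 𝓩) × (Fin n → 𝓩)) : resample ∅ p = p.1 := by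
  funext i; simp [resample]

omit [MeasurableSpace 𝓩] in
lemma resample_univ (p : (Fin n → 𝓩) × (Fin n → 𝓩)) : resample Finset.univ p = p.2 := by
  funext i; simp [resample]

variable (ν : Fin n → Measure 𝓩) [∀ i, IsProbabilityMeasure (ν i)]

lemma measurePreserving_resample (B : Finset (Fin n)) :
    MeasurePreserving (resample (𝓩 := 𝓩) B)
      ((Measure.pi ν).prod (Measure.pi ν)) (Measure.pi ν) := by
  have h1 : MeasurePreserving (MeasurableEquiv.arrowProdEquivProdArrow 𝓩 𝓩 (Fin n)).symm
      ((Measure.pi ν).prod (Measure.pi ν)) (Measure.pi fun i => (ν i).prod (ν i)) :=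
    (measurePreserving_arrowProdEquivProdArrow 𝓩 𝓩 (Fin n) ν ν).symm _
  have h2 : MeasurePreserving
      (fun (a : Fin n → 𝓩 × 𝓩) (i : Fin n) => (if i ∈ B then Prod.snd else Prod.fst) (a i))
      (Measure.pi fun i => (ν i).prod (ν i)) (Measure.pi ν) := by
    refine measurePreserving_pi _ _ (fun i => ?_)
    by_cases h : i ∈ B <;> simp only [h, if_true, if_false]
    · exact ⟨measurable_snd, by simp [Measure.map_snd_prod]⟩
    · exact ⟨measurable_fst, by simp [Measure.map_fst_prod]⟩
  have := h2.comp h1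
  convert this using 1
  funext p
  funext i
  by_cases h : i ∈ B <;>
    simp [resample, MeasurableEquiv.arrowProdEquivProdArrow, Equiv.arrowProdEquivProdArrow, h]

lemma measurePreserving_swapAt (j : Fin n) :
    MeasurePreserving (swapAt (𝓩 := 𝓩) j)
      ((Measure.pi ν).prod (Measure.pi ν)) ((Measure.pi ν).prod (Measure.pi ν)) := by
  have he := measurePreserving_arrowProdEquivProdArrow 𝓩 𝓩 (Fin n) ν ν
  have h2 : MeasurePreserving
      (fun (a : Fin n → 𝓩 × 𝓩) (i : Fin n) => (if i = j then Prod.swap else id) (a i))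
      (Measure.pi fun i => (ν i).prod (ν i)) (Measure.pi fun i => (ν i).prod (ν i)) := by
    refine measurePreserving_pi _ _ (fun i => ?_)
    by_cases h : i = j <;> simp only [h, if_true, if_false]
    · exact Measure.measurePreserving_swap
    · exact MeasurePreserving.id _
  have hc := he.comp (h2.comp (he.symm _))
  convert hc using 1
  funext p
  refine Prod.ext ?_ ?_ <;> funext i <;>
    · show _ = _
      by_cases h : i = j <;>
        simp [swapAt, MeasurableEquiv.arrowProdEquivProdArrow, Equiv.arrowProdEquivProdArrow,
          Function.update_apply, h]

lemma coeff_eq (n k : ℕ) (hk : k ≤ n) :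
    (k : ℝ) * (((k - 1).factorial * (n - (k - 1) - 1).factorial : ℕ) / (n.factorial : ℝ))
      - ((n : ℝ) - k) * (((k.factorial * (n - k - 1).factorial : ℕ) : ℝ) / (n.factorial : ℝ))
    = (if k = n then 1 else 0) - (if k = 0 then 1 else 0) := by
  have hn0 : (n.factorial : ℝ) ≠ 0 := Nat.cast_ne_zero.mpr n.factorial_ne_zero
  rcases Nat.eq_zero_or_pos k with hk0 | hk0
  · subst hk0
    rcases Nat.eq_zero_or_pos n with hn | hn
    · subst hn; norm_num
    · simp only [Nat.cast_zero, zero_mul, Nat.zero_sub, if_neg (by omega : (0:ℕ) ≠ n), if_pos rfl]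
      have h1 : n - 0 - 1 = n - 1 := by omega
      have h2 : (n : ℝ) - 0 = n := by ring
      rw [h1, h2, Nat.factorial_zero]
      have : (n : ℝ) * ((n-1).factorial : ℝ) = (n.factorial : ℝ) := by
        rw [← Nat.cast_mul, Nat.mul_factorial_pred hn.ne']
      push_cast
      rw [one_mul]
      field_simp
      linarith [this]
  · rcases eq_or_lt_of_le hk with hkn | hkn
    · subst hkn
      simp only [if_pos rfl, if_neg (by omega : k ≠ 0)]
      have h1 : k - (k - 1) - 1 = 0 := by omega
      have h2 : (k : ℝ) - k = 0 := by ring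
      rw [h1, h2, Nat.factorial_zero]
      have : (k : ℝ) * ((k-1).factorial : ℝ) = (k.factorial : ℝ) := by
        rw [← Nat.cast_mul, Nat.mul_factorial_pred hk0.ne']
      push_cast
      rw [zero_mul, sub_zero, sub_zero]
      field_simp
      linarith [this]
    · simp only [if_neg (by omega : k ≠ n), if_neg (by omega : k ≠ 0)]
      have h1 : n - (k - 1) - 1 = n - k := by omega
      rw [h1]
      have e1 : (k : ℝ) * ((k-1).factorial : ℝ) = (k.factorial : ℝ) := by
        rw [← Nat.cast_mul, Nat.mul_factorial_pred hk0.ne']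
      have e2 : ((n : ℝ) - k) * ((n - k - 1).factorial : ℝ) = ((n-k).factorial : ℝ) := by
        have : (n : ℝ) - k = ((n - k : ℕ) : ℝ) := by
          push_cast [Nat.cast_sub (le_of_lt hkn)]; ring
        rw [this, ← Nat.cast_mul, Nat.mul_factorial_pred (by omega)]
      push_cast
      field_simp
      nlinarith [e1, e2, (Nat.cast_pos (α := ℝ)).mpr (Nat.factorial_pos n)]

lemma telescope1 (n : ℕ) (c : Finset (Fin n) → ℝ) (w : ℕ → ℝ) :
    ∑ j : Fin n, ∑ A ∈ Finset.univ.powerset.filter (fun A : Finset (Fin n) => j ∉ A),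
        w A.card * (c (insert j A) - c A)
      = ∑ B ∈ Finset.univ.powerset,
          ((B.card : ℝ) * (w (B.card - 1) * c B) - ((n - B.card : ℕ) : ℝ) * (w B.card * c B)) := by
  have key : ∀ j : Fin n,
      ∑ A ∈ Finset.univ.powerset.filter (fun A : Finset (Fin n) => j ∉ A),
        w A.card * (c (insert j A) - c A)
      = ∑ B ∈ Finset.univ.powerset,
          ((if j ∈ B then w (B.card - 1) * c B else 0)
            - (if j ∉ B then w B.card * c B else 0)) := by
    intro j
    simp_rw [mul_sub]
    rw [Finset.sum_sub_distrib, Finset.sum_sub_distrib]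
    congr 1
    · rw [← Finset.sum_filter]
      refine Finset.sum_nbij' (fun A => insert j A) (fun B => B.erase j) ?_ ?_ ?_ ?_ ?_
      · intro A hA
        simp only [Finset.mem_filter, Finset.mem_powerset] at hA ⊢
        exact ⟨Finset.subset_univ _, Finset.mem_insert_self _ _⟩
      · intro B hB
        simp only [Finset.mem_filter, Finset.mem_powerset] at hB ⊢
        exact ⟨Finset.subset_univ _, Finset.notMem_erase _ _⟩
      · intro A hA
        simp only [Finset.mem_filter, Finset.mem_powerset] at hA
        exact Finset.erase_insert hA.2
      · intro B hB
        simp only [Finset.mem_filter, Finset.mem_powerset] at hB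
        exact Finset.insert_erase hB.2
      · intro A hA
        simp only [Finset.mem_filter, Finset.mem_powerset] at hA
        rw [Finset.card_insert_of_notMem hA.2]
        simp
    · rw [← Finset.sum_filter]
  rw [Finset.sum_congr rfl (fun j _ => key j)]
  rw [Finset.sum_comm]
  refine Finset.sum_congr rfl (fun B hB => ?_)
  rw [Finset.sum_sub_distrib]
  congr 1
  · rw [Finset.sum_ite_mem, Finset.univ_inter, Finset.sum_const, nsmul_eq_mul]
  · have : ∀ j : Fin n, (if j ∉ B then w B.card * c B else 0)
        = (if j ∈ Bᶜ then w B.card * c B else 0) := by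
      intro j; simp [Finset.mem_compl]
    simp_rw [this]
    rw [Finset.sum_ite_mem, Finset.univ_inter, Finset.sum_const, nsmul_eq_mul,
      Finset.card_compl, Fintype.card_fin]

lemma telescope2 (n : ℕ) (c : Finset (Fin n) → ℝ) :
    ∑ j : Fin n, ∑ A ∈ Finset.univ.powerset.filter (fun A : Finset (Fin n) => j ∉ A),
        (((A.card.factorial * (n - A.card - 1).factorial : ℕ) : ℝ) / (n.factorial : ℝ))
          * (c (insert j A) - c A)
      = c Finset.univ - c ∅ := by
  rw [telescope1 n c
    (fun k => ((k.factorial * (n - k - 1).factorial : ℕ) : ℝ) / (n.factorial : ℝ))]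
  have step : ∀ B ∈ (Finset.univ.powerset : Finset (Finset (Fin n))),
      ((B.card : ℝ) *
          ((((B.card - 1).factorial * (n - (B.card - 1) - 1).factorial : ℕ) : ℝ) / (n.factorial : ℝ)
            * c B)
        - ((n - B.card : ℕ) : ℝ) *
          ((((B.card).factorial * (n - B.card - 1).factorial : ℕ) : ℝ) / (n.factorial : ℝ) * c B))
      = (if B = Finset.univ then 1 else 0) * c B - (if B = ∅ then 1 else 0) * c B := by
    intro B _
    have hk : B.card ≤ n := le_trans (Finset.card_le_univ B) (by simp)
    have hcast : ((n - B.card : ℕ) : ℝ) = (n : ℝ) - B.card := by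
      exact Nat.cast_sub hk
    have h2 : (B = Finset.univ) = (B.card = n) := by
      rw [eq_iff_iff, ← Finset.card_eq_iff_eq_univ, Fintype.card_fin]
    have h3 : (B = (∅ : Finset (Fin n))) = (B.card = 0) := by
      rw [eq_iff_iff, ← Finset.card_eq_zero]
    rw [hcast]
    simp only [h2, h3]
    have h := coeff_eq n B.card hk
    push_cast at h ⊢
    linear_combination c B * h
  rw [Finset.sum_congr rfl step, Finset.sum_sub_distrib]
  simp_rw [ite_mul, one_mul, zero_mul]
  rw [Finset.sum_ite_eq' _ _ c, Finset.sum_ite_eq' _ _ c]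
  simp [Finset.empty_mem_powerset]

end ChatterjeeAux

open ChatterjeeAux

/-- Chatterjee's covariance identity: for square-integrable functions `g, f` of a
vector `Z` with independent coordinates, with `Z'` an independent copy,
`Cov(g(Z), f(Z)) = (1/2) ∑_j ∑_{A ⊆ [n], j ∉ A} K_{n,A} E[Δ_j g(Z) · Δ_j f(Z^A)]`
where `K_{n,A} = |A|! (n - |A| - 1)! / n!`, `Z^A` resamples the coordinates in `A`,
and `Δ_j f(Z^A) = f(Z^{A ∪ {j}}) - f(Z^A)`. -/
theorem chatterjee_covariance_identity {Ω 𝓩 : Type*} [MeasurableSpace Ω] [MeasurableSpace 𝓩]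
    (μ : Measure Ω) [IsProbabilityMeasure μ] {n : ℕ}
    (Z Z' : Ω → (Fin n → 𝓩))
    (hZmeas : Measurable Z) (hZ'meas : Measurable Z')
    (hcoordindep : iIndepFun (m := fun _ : Fin n => (inferInstance : MeasurableSpace 𝓩))
      (fun j ω => Z ω j) μ)
    (hindep : IndepFun Z Z' μ)
    (hcopy : Measure.map Z μ = Measure.map Z' μ)
    (f g : (Fin n → 𝓩) → ℝ) (hf : Measurable f) (hg : Measurable g)
    (hfL2 : MemLp (fun ω => f (Z ω)) 2 μ) (hgL2 : MemLp (fun ω => g (Z ω)) 2 μ)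
    -- `ZA A ω` is the vector `Z(ω)` with the coordinates in `A` replaced by those of `Z'(ω)`
    (ZA : Finset (Fin n) → Ω → (Fin n → 𝓩))
    (hZA : ∀ A ω i, ZA A ω i = if i ∈ A then Z' ω i else Z ω i) :
    (∫ ω, g (Z ω) * f (Z ω) ∂μ) - (∫ ω, g (Z ω) ∂μ) * (∫ ω, f (Z ω) ∂μ) =
      (1/2) * ∑ j : Fin n,
        ∑ A ∈ Finset.univ.powerset.filter (fun A : Finset (Fin n) => j ∉ A),
          (((A.card.factorial * (n - A.card - 1).factorial : ℕ) : ℝ) / (n.factorial : ℝ)) *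
            ∫ ω, (g (Function.update (Z ω) j (Z' ω j)) - g (Z ω)) *
                  (f (ZA (insert j A) ω) - f (ZA A ω)) ∂μ := by
  classical
  -- coordinate laws
  set ν : Fin n → Measure 𝓩 := fun i => μ.map (fun ω => Z ω i) with hν
  have hZi : ∀ i, Measurable (fun ω => Z ω i) := fun i => (measurable_pi_apply i).comp hZmeas
  haveI : ∀ i, IsProbabilityMeasure (ν i) := fun i => Measure.isProbabilityMeasure_map (hZi i).aemeasurable
  set π : Measure (Fin n → 𝓩) := Measure.pi ν with hπ
  set P : Measure ((Fin n → 𝓩) × (Fin n → 𝓩)) := π.prod π with hPdef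
  haveI : IsProbabilityMeasure π := by rw [hπ]; infer_instance
  haveI : IsProbabilityMeasure P := by rw [hPdef]; infer_instance
  -- the law of Z is the product measure
  have hmapZ : μ.map Z = π := by
    refine (Measure.pi_eq fun s hs => ?_).symm
    rw [Measure.map_apply hZmeas (MeasurableSet.univ_pi hs)]
    have hpre : Z ⁻¹' (Set.pi Set.univ s) = ⋂ i ∈ Finset.univ, (fun ω => Z ω i) ⁻¹' (s i) := by
      ext ω; simp [Set.mem_pi]
    rw [hpre, hcoordindep.measure_inter_preimage_eq_mul Finset.univ (fun i _ => hs i)]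
    exact Finset.prod_congr rfl fun i _ => (Measure.map_apply (hZi i) (hs i)).symm
  -- the joint law of (Z, Z') is P
  have hmapPair : μ.map (fun ω => (Z ω, Z' ω)) = P := by
    rw [(indepFun_iff_map_prod_eq_prod_map_map hZmeas.aemeasurable hZ'meas.aemeasurable).mp hindep,
      ← hcopy, hmapZ]
  -- transfer of integrals
  have hpairmeas : AEMeasurable (fun ω => (Z ω, Z' ω)) μ :=
    (hZmeas.prodMk hZ'meas).aemeasurable
  have transfer : ∀ F : ((Fin n → 𝓩) × (Fin n → 𝓩)) → ℝ, Measurable F →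
      ∫ ω, F (Z ω, Z' ω) ∂μ = ∫ p, F p ∂P := by
    intro F hF
    have h := integral_map hpairmeas (f := F)
      (hmapPair ▸ hF.aestronglyMeasurable : AEStronglyMeasurable F (μ.map fun ω => (Z ω, Z' ω)))
    rw [hmapPair] at h
    exact h.symm
  -- L² membership
  have hgπ : MemLp g 2 π := by
    rw [← hmapZ]
    exact (memLp_map_measure_iff hg.aestronglyMeasurable hZmeas.aemeasurable).mpr hgL2
  have hfπ : MemLp f 2 π := by
    rw [← hmapZ]
    exact (memLp_map_measure_iff hf.aestronglyMeasurable hZmeas.aemeasurable).mpr hfL2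
  have hmpR : ∀ B : Finset (Fin n), MeasurePreserving (resample B) P π :=
    fun B => measurePreserving_resample ν B
  have hgB : ∀ B : Finset (Fin n), MemLp (fun p => g (resample B p)) 2 P := by
    intro B
    have h := (hmpR B).map_eq
    refine (memLp_map_measure_iff hg.aestronglyMeasurable
      (measurable_resample B).aemeasurable).mp ?_
    rw [h]; exact hgπ
  have hfB : ∀ B : Finset (Fin n), MemLp (fun p => f (resample B p)) 2 P := by
    intro B
    have h := (hmpR B).map_eq
    refine (memLp_map_measure_iff hf.aestronglyMeasurable
      (measurable_resample B).aemeasurable).mp ?_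
    rw [h]; exact hfπ
  -- products of L² functions are integrable
  have hmul : ∀ u v : ((Fin n → 𝓩) × (Fin n → 𝓩)) → ℝ, MemLp u 2 P → MemLp v 2 P →
      Integrable (fun p => u p * v p) P := by
    intro u v hu hv
    have h : MemLp (u • v) 1 P := by
      exact hv.smul hu
    rw [← memLp_one_iff_integrable]
    exact h
  -- the interpolation quantities
  set c : Finset (Fin n) → ℝ :=
    fun B => ∫ p, g (resample ∅ p) * f (resample B p) ∂P with hc
  -- measurability of the integrands
  have hmeasG : ∀ B : Finset (Fin n),
      Measurable (fun p : (Fin n → 𝓩) × (Fin n → 𝓩) => g (resample B p)) :=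
    fun B => hg.comp (measurable_resample B)
  have hmeasF : ∀ B : Finset (Fin n),
      Measurable (fun p : (Fin n → 𝓩) × (Fin n → 𝓩) => f (resample B p)) :=
    fun B => hf.comp (measurable_resample B)
  -- the swap identity
  have hswap : ∀ (B C : Finset (Fin n)) (j : Fin n),
      ∫ p, g (resample B p) * f (resample C p) ∂P
      = ∫ p, g (resample (if j ∈ B then B.erase j else insert j B) p)
          * f (resample (if j ∈ C then C.erase j else insert j C) p) ∂P := by
    intro B C j
    have hmp : MeasurePreserving (swapAt j) P P := measurePreserving_swapAt ν j
    have h1 : ∫ p, g (resample B p) * f (resample C p) ∂P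
        = ∫ p, g (resample B (swapAt j p)) * f (resample C (swapAt j p)) ∂P := by
      conv_lhs => rw [← hmp.map_eq]
      rw [integral_map (f := fun p => g (resample B p) * f (resample C p))
        hmp.measurable.aemeasurable
        (((hmeasG B).mul (hmeasF C)).aestronglyMeasurable)]
    rw [h1]
    congr 1
    funext p
    rw [resample_swapAt, resample_swapAt]
  -- the per-term identity
  have hterm : ∀ (j : Fin n) (A : Finset (Fin n)), j ∉ A →
      ∫ p, (g (resample {j} p) - g (resample ∅ p))
          * (f (resample (insert j A) p) - f (resample A p)) ∂P
      = 2 * (c A - c (insert j A)) := by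
    intro j A hjA
    have e1 : ∫ p, g (resample {j} p) * f (resample (insert j A) p) ∂P = c A := by
      rw [hswap _ _ j]
      simp only [Finset.mem_singleton, if_pos rfl, Finset.mem_insert, true_or, if_pos,
        Finset.erase_insert hjA]
      rw [hc]
      congr 1
      funext p
      congr 2
      simp [Finset.erase_singleton]
    have e2 : ∫ p, g (resample {j} p) * f (resample A p) ∂P = c (insert j A) := by
      rw [hswap _ _ j]
      simp only [Finset.mem_singleton, if_pos rfl, if_neg hjA]
      rw [hc]
      congr 1
      funext p
      congr 2
      simp [Finset.erase_singleton]
    have expand : (fun p => (g (resample {j} p) - g (resample ∅ p))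
          * (f (resample (insert j A) p) - f (resample A p)))
        = fun p => (g (resample {j} p) * f (resample (insert j A) p)
            - g (resample {j} p) * f (resample A p))
          - (g (resample ∅ p) * f (resample (insert j A) p)
            - g (resample ∅ p) * f (resample A p)) := by
      funext p; ring
    have I1 : Integrable (fun p => g (resample {j} p) * f (resample (insert j A) p)) P :=
      hmul _ _ (hgB {j}) (hfB (insert j A))
    have I2 : Integrable (fun p => g (resample {j} p) * f (resample A p)) P :=
      hmul _ _ (hgB {j}) (hfB A)
    have I3 : Integrable (fun p => g (resample ∅ p) * f (resample (insert j A) p)) P :=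
      hmul _ _ (hgB ∅) (hfB (insert j A))
    have I4 : Integrable (fun p => g (resample ∅ p) * f (resample A p)) P :=
      hmul _ _ (hgB ∅) (hfB A)
    have I12 : Integrable (fun p => g (resample {j} p) * f (resample (insert j A) p)
        - g (resample {j} p) * f (resample A p)) P := I1.sub I2
    have I34 : Integrable (fun p => g (resample ∅ p) * f (resample (insert j A) p)
        - g (resample ∅ p) * f (resample A p)) P := I3.sub I4
    rw [expand, integral_sub I12 I34, integral_sub I1 I2, integral_sub I3 I4,
      e1, e2]
    show c A - c (insert j A) - (c (insert j A) - c A) = 2 * (c A - c (insert j A))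
    ring
  -- transfer of the RHS integrals
  have hZAr : ∀ (B : Finset (Fin n)) (ω : Ω), ZA B ω = resample B (Z ω, Z' ω) := by
    intro B ω
    funext i
    rw [hZA]
    rfl
  have hupd : ∀ (j : Fin n) (ω : Ω),
      Function.update (Z ω) j (Z' ω j) = resample {j} (Z ω, Z' ω) := by
    intro j ω
    funext i
    by_cases h : i = j
    · subst h; simp [resample, Function.update_apply]
    · simp [resample, Function.update_apply, h]
  have hZ1 : ∀ ω : Ω, Z ω = resample ∅ (Z ω, Z' ω) := by
    intro ω; rw [resample_empty]
  -- transfer each RHS integral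
  have hRHSterm : ∀ (j : Fin n) (A : Finset (Fin n)), j ∉ A →
      ∫ ω, (g (Function.update (Z ω) j (Z' ω j)) - g (Z ω)) *
            (f (ZA (insert j A) ω) - f (ZA A ω)) ∂μ
        = 2 * (c A - c (insert j A)) := by
    intro j A hjA
    have hFmeas : Measurable (fun p : (Fin n → 𝓩) × (Fin n → 𝓩) =>
        (g (resample {j} p) - g (resample ∅ p))
          * (f (resample (insert j A) p) - f (resample A p))) :=
      (((hmeasG {j}).sub (hmeasG ∅)).mul ((hmeasF (insert j A)).sub (hmeasF A)))
    have heq : (fun ω => (g (Function.update (Z ω) j (Z' ω j)) - g (Z ω)) *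
            (f (ZA (insert j A) ω) - f (ZA A ω)))
        = fun ω => (g (resample {j} (Z ω, Z' ω)) - g (resample ∅ (Z ω, Z' ω)))
            * (f (resample (insert j A) (Z ω, Z' ω)) - f (resample A (Z ω, Z' ω))) := by
      funext ω
      rw [← hupd j ω, ← hZ1 ω, ← hZAr (insert j A) ω, ← hZAr A ω]
    rw [heq, transfer _ hFmeas, hterm j A hjA]
  -- transfer the LHS integrals
  have hL1 : ∫ ω, g (Z ω) * f (Z ω) ∂μ = c ∅ := by
    have hFmeas : Measurable (fun p : (Fin n → 𝓩) × (Fin n → 𝓩) =>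
        g (resample ∅ p) * f (resample ∅ p)) := (hmeasG ∅).mul (hmeasF ∅)
    have heq : (fun ω => g (Z ω) * f (Z ω))
        = fun ω => g (resample ∅ (Z ω, Z' ω)) * f (resample ∅ (Z ω, Z' ω)) := by
      funext ω; rw [← hZ1 ω]
    rw [heq, transfer _ hFmeas]
  have hgint : ∫ ω, g (Z ω) ∂μ = ∫ x, g x ∂π := by
    rw [← hmapZ, integral_map hZmeas.aemeasurable hg.aestronglyMeasurable]
  have hfint : ∫ ω, f (Z ω) ∂μ = ∫ x, f x ∂π := by
    rw [← hmapZ, integral_map hZmeas.aemeasurable hf.aestronglyMeasurable]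
  have hcu : c Finset.univ = (∫ x, g x ∂π) * (∫ y, f y ∂π) := by
    have heq : (fun p : (Fin n → 𝓩) × (Fin n → 𝓩) =>
        g (resample ∅ p) * f (resample Finset.univ p))
        = fun p : (Fin n → 𝓩) × (Fin n → 𝓩) => g p.1 * f p.2 := by
      funext p; rw [resample_empty, resample_univ]
    show (∫ p, g (resample ∅ p) * f (resample Finset.univ p) ∂P) = _
    rw [heq]
    exact integral_prod_mul g f
  have hL2' : (∫ ω, g (Z ω) ∂μ) * (∫ ω, f (Z ω) ∂μ) = c Finset.univ := by
    rw [hgint, hfint, hcu]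
  -- assemble
  rw [hL1, hL2']
  have hsum : ∀ (j : Fin n) (A : Finset (Fin n)),
      A ∈ Finset.univ.powerset.filter (fun A : Finset (Fin n) => j ∉ A) →
      (((A.card.factorial * (n - A.card - 1).factorial : ℕ) : ℝ) / (n.factorial : ℝ)) *
          ∫ ω, (g (Function.update (Z ω) j (Z' ω j)) - g (Z ω)) *
                (f (ZA (insert j A) ω) - f (ZA A ω)) ∂μ
        = (-2) * ((((A.card.factorial * (n - A.card - 1).factorial : ℕ) : ℝ) / (n.factorial : ℝ))
            * (c (insert j A) - c A)) := by
    intro j A hA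
    simp only [Finset.mem_filter, Finset.mem_powerset] at hA
    rw [hRHSterm j A hA.2]
    ring
  calc c ∅ - c Finset.univ
      = (1/2) * ((-2) * (c Finset.univ - c ∅)) := by ring
    _ = (1/2) * ((-2) * ∑ j : Fin n,
          ∑ A ∈ Finset.univ.powerset.filter (fun A : Finset (Fin n) => j ∉ A),
            (((A.card.factorial * (n - A.card - 1).factorial : ℕ) : ℝ) / (n.factorial : ℝ))
              * (c (insert j A) - c A)) := by rw [telescope2 n c]
    _ = (1/2) * ∑ j : Fin n,
          ∑ A ∈ Finset.univ.powerset.filter (fun A : Finset (Fin n) => j ∉ A),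
            (-2) * ((((A.card.factorial * (n - A.card - 1).factorial : ℕ) : ℝ) / (n.factorial : ℝ))
              * (c (insert j A) - c A)) := by
        rw [Finset.mul_sum]
        congr 1
        exact Finset.sum_congr rfl fun j _ => (Finset.mul_sum _ _ _)
    _ = (1/2) * ∑ j : Fin n,
          ∑ A ∈ Finset.univ.powerset.filter (fun A : Finset (Fin n) => j ∉ A),
            (((A.card.factorial * (n - A.card - 1).factorial : ℕ) : ℝ) / (n.factorial : ℝ)) *
              ∫ ω, (g (Function.update (Z ω) j (Z' ω j)) - g (Z ω)) *
                    (f (ZA (insert j A) ω) - f (ZA A ω)) ∂μ := by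
        congr 1
        exact Finset.sum_congr rfl fun j _ =>
          (Finset.sum_congr rfl fun A hA => (hsum j A hA).symm)
end
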